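/- ∑_{E ⊆ [n]} q^{maj(E)} = ∑_{h=0}^{n} q^{n-h} [n choose h]_q, where for E ⊆ [n], maj(E) = ∑ of those i ∈ E with i+1 ∉ E, and [n choose h]_q is the Gaussian binomial coefficient. -/

import Mathlib

open Finset Polynomial
open scoped Classical

/-- For `E ⊆ [n]`, `Des(E) = {i ∈ E : i+1 ∉ E}`. -/
def DesE (E : Finset ℕ) : Finset ℕ := E.filter (fun i => i + 1 ∉ E)

/-- `des(E) = |Des(E)|`. -/
def desE (E : Finset ℕ) : ℕ := (DesE E).card

/-- `maj(E) = ∑_{i ∈ Des(E)} i`. -/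
def majE (E : Finset ℕ) : ℕ := ∑ i ∈ DesE E, i

/-- The Gaussian (q-)binomial coefficient `[n choose k]_q` as a polynomial in `q`. -/
noncomputable def qbinom : ℕ → ℕ → Polynomial ℤ
  | _, 0 => 1
  | 0, _ + 1 => 0
  | n + 1, k + 1 => qbinom n k + Polynomial.X ^ (k + 1) * qbinom n (k + 1)

lemma qbinom_succ_succ (n k : ℕ) :
    qbinom (n+1) (k+1) = qbinom n k + X ^ (k+1) * qbinom n (k+1) := rfl

lemma qbinom_zero_right (n : ℕ) : qbinom n 0 = 1 := by cases n <;> rfl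

lemma qbinom_of_lt : ∀ {n k : ℕ}, n < k → qbinom n k = 0 := by
  intro n
  induction n with
  | zero => intro k hk; cases k with
    | zero => omega
    | succ k => rfl
  | succ n ih =>
    intro k hk
    cases k with
    | zero => omega
    | succ k =>
      rw [qbinom_succ_succ, ih (by omega), ih (by omega), mul_zero, add_zero]

lemma qbinom_self (n : ℕ) : qbinom n n = 1 := by
  induction n with
  | zero => rfl
  | succ n ih =>
    rw [qbinom_succ_succ, ih, qbinom_of_lt (by omega), mul_zero, add_zero]

lemma qbinom_pascal2 : ∀ (n : ℕ) {k : ℕ}, k ≤ n →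
    qbinom (n+1) (k+1) = X ^ (n-k) * qbinom n k + qbinom n (k+1) := by
  intro n
  induction n with
  | zero =>
    intro k hk
    interval_cases k
    simp [qbinom_succ_succ, qbinom_zero_right, qbinom_of_lt]
  | succ n ih =>
    intro k hk
    rcases Nat.lt_or_ge k (n+1) with hk' | hk'
    · have hkn : k ≤ n := by omega
      have key : qbinom (n+1) k + X ^ (n+1) * qbinom n k
          = X ^ (n+1-k) * qbinom (n+1) k + qbinom n k := by
        cases k with
        | zero =>
          rw [qbinom_zero_right, qbinom_zero_right, Nat.sub_zero]
          ring
        | succ j =>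
          have hj : j ≤ n := by omega
          have hj' : j < n := by omega
          conv_lhs => rw [ih hj]
          conv_rhs => rw [qbinom_succ_succ n j]
          rw [show n + 1 - (j+1) = n - j from by omega]
          have hpow2 : (X:Polynomial ℤ) ^ (n-j) * X ^ (j+1) = X ^ (n+1) := by
            rw [← pow_add, show n-j+(j+1) = n+1 from by omega]
          linear_combination (- qbinom n (j+1)) * hpow2
      rw [show (n:ℕ)+1+1 = (n+1)+1 from rfl, qbinom_succ_succ (n+1) k]
      conv_lhs => rw [ih hkn]
      conv_rhs => rw [qbinom_succ_succ n k]
      have hpow : (X:Polynomial ℤ) ^ (k+1) * X ^ (n-k) = X ^ (n+1) := by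
        rw [← pow_add, show k+1+(n-k) = n+1 from by omega]
      linear_combination key + qbinom n k * hpow
    · have : k = n + 1 := by omega
      subst this
      rw [qbinom_succ_succ, qbinom_of_lt (Nat.lt_succ_self _), mul_zero, add_zero,
        add_zero, Nat.sub_self, pow_zero, one_mul]

lemma qbinom_symm : ∀ (n : ℕ) {k : ℕ}, k ≤ n → qbinom n (n - k) = qbinom n k := by
  intro n
  induction n with
  | zero => intro k hk; interval_cases k; rfl
  | succ n ih =>
    intro k hk
    cases k with
    | zero => rw [Nat.sub_zero, qbinom_self, qbinom_zero_right]
    | succ j =>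
      rcases Nat.lt_or_ge j n with hj | hj
      · rw [show n + 1 - (j+1) = (n - j - 1) + 1 from by omega,
          qbinom_pascal2 n (show n - j - 1 ≤ n from by omega),
          show n - (n - j - 1) = j + 1 from by omega,
          show n - j - 1 + 1 = n - j from by omega,
          show n - j - 1 = n - (j+1) from by omega,
          ih (show j + 1 ≤ n from by omega),
          ih (le_of_lt hj), qbinom_succ_succ]
        ring
      · have hjn : j = n := by omega
        subst hjn
        rw [Nat.sub_self, qbinom_zero_right, qbinom_self]

lemma DesE_subset (E : Finset ℕ) : DesE E ⊆ E := filter_subset _ _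

lemma DesE_insert {E : Finset ℕ} {n : ℕ} (hE : E ⊆ Finset.Icc 1 n) :
    DesE (insert (n+1) E) = insert (n+1) ((DesE E).erase n) := by
  have hb : ∀ x ∈ E, x ≤ n := fun x hx => (mem_Icc.mp (hE hx)).2
  have h2 : n + 2 ∉ E := fun h => by have := hb _ h; omega
  ext x
  simp only [DesE, mem_filter, mem_insert, mem_erase]
  constructor
  · rintro ⟨hx | hx, hx1⟩
    · exact Or.inl hx
    · have hxn : x ≤ n := hb _ hx
      refine Or.inr ⟨?_, hx, ?_⟩
      · rintro rfl; exact hx1 (Or.inl rfl)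
      · intro h; exact hx1 (Or.inr h)
  · rintro (rfl | ⟨hxn, hx, hx1⟩)
    · refine ⟨Or.inl rfl, ?_⟩
      rintro (h | h)
      · omega
      · exact h2 h
    · refine ⟨Or.inr hx, ?_⟩
      rintro (h | h)
      · exact hxn (by omega)
      · exact hx1 h

lemma majE_insert_not_mem {E : Finset ℕ} {n : ℕ} (hE : E ⊆ Finset.Icc 1 n)
    (hn : n ∉ E) : majE (insert (n+1) E) = majE E + (n+1) := by
  have hb : ∀ x ∈ E, x ≤ n := fun x hx => (mem_Icc.mp (hE hx)).2
  have h1 : n + 1 ∉ DesE E := fun h => by have := hb _ (DesE_subset E h); omega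
  have hn' : n ∉ DesE E := fun h => hn (DesE_subset E h)
  rw [majE, DesE_insert hE, erase_eq_of_notMem hn', sum_insert h1]
  rw [majE]; omega

lemma majE_insert_mem {E : Finset ℕ} {n : ℕ} (hE : E ⊆ Finset.Icc 1 n)
    (hn : n ∈ E) : majE (insert (n+1) E) = majE E + 1 := by
  have hb : ∀ x ∈ E, x ≤ n := fun x hx => (mem_Icc.mp (hE hx)).2
  have h1 : n + 1 ∉ (DesE E).erase n := fun h => by
    have := hb _ (DesE_subset E (mem_of_mem_erase h)); omega
  have hnE : n ∈ DesE E := by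
    rw [DesE, mem_filter]
    exact ⟨hn, fun h => by have := hb _ h; omega⟩
  have hsum : n + ∑ x ∈ (DesE E).erase n, x = majE E :=
    Finset.add_sum_erase _ (fun x => x) hnE
  rw [majE, DesE_insert hE, sum_insert h1]
  omega

lemma majE_empty : majE ∅ = 0 := rfl

lemma main_induction : ∀ n : ℕ,
    (∀ k, ∑ E ∈ (Finset.Icc 1 n).powersetCard k, (X : Polynomial ℤ) ^ majE E
        = X ^ k * qbinom n k)
    ∧ (∀ k, ∑ E ∈ (Finset.Icc 1 n).powersetCard k, (X : Polynomial ℤ) ^ majE (insert (n+1) E)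
        = X ^ (n+1) * qbinom n k) := by
  intro n
  induction n with
  | zero =>
    constructor
    · intro k
      cases k with
      | zero =>
        rw [powersetCard_zero, sum_singleton, majE_empty, qbinom_zero_right]
        simp
      | succ k =>
        rw [show Finset.Icc 1 0 = (∅ : Finset ℕ) from rfl,
          show (∅ : Finset ℕ).powersetCard (k+1) = ∅ from
            powersetCard_eq_empty.mpr (by simp), sum_empty,
          qbinom_of_lt (by omega), mul_zero]
    · intro k
      cases k with
      | zero =>
        rw [powersetCard_zero, sum_singleton, qbinom_zero_right, mul_one]
        have h : majE (insert (0+1) (∅ : Finset ℕ)) = 0 + 1 := by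
          rw [majE_insert_not_mem (by simp) (by simp), majE_empty]
        rw [h]
      | succ k =>
        rw [show Finset.Icc 1 0 = (∅ : Finset ℕ) from rfl,
          show (∅ : Finset ℕ).powersetCard (k+1) = ∅ from
            powersetCard_eq_empty.mpr (by simp), sum_empty,
          qbinom_of_lt (by omega), mul_zero]
  | succ n ih =>
    obtain ⟨ihS, ihT⟩ := ih
    have hni : (n+1) ∉ Finset.Icc 1 n := by simp
    have hIcc : Finset.Icc 1 (n+1) = insert (n+1) (Finset.Icc 1 n) := by
      ext x; simp [mem_Icc]; omega
    have hdisj : ∀ k, Disjoint ((Finset.Icc 1 n).powersetCard (k+1))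
        (((Finset.Icc 1 n).powersetCard k).image (insert (n+1))) := by
      intro k
      rw [disjoint_right]
      intro E hE hE'
      obtain ⟨E', hE', rfl⟩ := mem_image.mp hE
      have := (mem_powersetCard.mp hE').1 (mem_insert_self (n+1) E')
      exact hni this
    have hinj : ∀ k, ∀ x ∈ (Finset.Icc 1 n).powersetCard k,
        ∀ y ∈ (Finset.Icc 1 n).powersetCard k,
        insert (n+1) x = insert (n+1) y → x = y := by
      intro k x hx y hy hxy
      have hx' : (n+1) ∉ x := fun h => hni ((mem_powersetCard.mp hx).1 h)
      have hy' : (n+1) ∉ y := fun h => hni ((mem_powersetCard.mp hy).1 h)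
      rw [← erase_insert hx', ← erase_insert hy', hxy]
    have hsplit : ∀ k (f : Finset ℕ → Polynomial ℤ),
        ∑ E ∈ (Finset.Icc 1 (n+1)).powersetCard (k+1), f E
        = ∑ E ∈ (Finset.Icc 1 n).powersetCard (k+1), f E
          + ∑ E ∈ (Finset.Icc 1 n).powersetCard k, f (insert (n+1) E) := by
      intro k f
      rw [hIcc, powersetCard_succ_insert hni, sum_union (hdisj k),
        sum_image (hinj k)]
    have S1 : ∀ k, ∑ E ∈ (Finset.Icc 1 (n+1)).powersetCard k, (X : Polynomial ℤ) ^ majE E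
        = X ^ k * qbinom (n+1) k := by
      intro k
      cases k with
      | zero =>
        rw [powersetCard_zero, sum_singleton, majE_empty, qbinom_zero_right]
        simp
      | succ k =>
        rw [hsplit k, ihS (k+1), ihT k]
        rcases le_or_gt k n with hkn | hkn
        · rw [qbinom_pascal2 n hkn]
          have hpow : (X : Polynomial ℤ) ^ (k+1) * X ^ (n-k) = X ^ (n+1) := by
            rw [← pow_add, show k+1+(n-k) = n+1 from by omega]
          linear_combination (- qbinom n k) * hpow
        · rw [qbinom_of_lt (show n < k+1 from by omega),
            qbinom_of_lt (show n < k from hkn),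
            qbinom_of_lt (show n+1 < k+1 from by omega)]
          ring
    refine ⟨S1, ?_⟩
    intro k
    cases k with
    | zero =>
      rw [powersetCard_zero, sum_singleton, qbinom_zero_right, mul_one]
      have h : majE (insert ((n+1)+1) (∅ : Finset ℕ)) = n + 1 + 1 := by
        rw [majE_insert_not_mem (empty_subset _) (notMem_empty _), majE_empty]
        omega
      rw [h]
    | succ k =>
      rw [hsplit k]
      have e1 : ∑ E ∈ (Finset.Icc 1 n).powersetCard (k+1),
          (X : Polynomial ℤ) ^ majE (insert (n+1+1) E)
          = X ^ (n+2) * (X ^ (k+1) * qbinom n (k+1)) := by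
        rw [← ihS (k+1), mul_sum]
        apply sum_congr rfl
        intro E hE
        have hE' : E ⊆ Finset.Icc 1 (n+1) := by
          refine subset_trans (mem_powersetCard.mp hE).1 ?_
          intro x hx; rw [mem_Icc] at hx ⊢; omega
        have hnE : (n+1) ∉ E := fun h => hni ((mem_powersetCard.mp hE).1 h)
        rw [show (n:ℕ)+1+1 = (n+1) + 1 from rfl, majE_insert_not_mem hE' hnE,
          pow_add]
        ring
      have e2 : ∑ E ∈ (Finset.Icc 1 n).powersetCard k,
          (X : Polynomial ℤ) ^ majE (insert (n+1+1) (insert (n+1) E))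
          = X * (X ^ (n+1) * qbinom n k) := by
        rw [← ihT k, mul_sum]
        apply sum_congr rfl
        intro E hE
        have hE' : insert (n+1) E ⊆ Finset.Icc 1 (n+1) := by
          intro x hx
          rcases mem_insert.mp hx with rfl | hx
          · rw [mem_Icc]; omega
          · have := (mem_powersetCard.mp hE).1 hx
            rw [mem_Icc] at this ⊢; omega
        rw [show (n:ℕ)+1+1 = (n+1) + 1 from rfl,
          majE_insert_mem hE' (mem_insert_self _ _), pow_add, pow_one]
        ring
      rw [e1, e2, qbinom_succ_succ]
      ring

/-- `∑_{E ⊆ [n]} q^{maj(E)} = ∑_{h=0}^{n} q^{n-h} [n choose h]_q`. -/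
theorem majE_generating_polynomial (n : ℕ) :
    ∑ E ∈ (Finset.Icc 1 n).powerset, (Polynomial.X : Polynomial ℤ) ^ majE E =
      ∑ h ∈ Finset.range (n + 1), Polynomial.X ^ (n - h) * qbinom n h := by
  have hS := (main_induction n).1
  rw [sum_powerset, Nat.card_Icc,
    show n + 1 - 1 = n from rfl]
  conv_rhs => rw [← sum_range_reflect (fun h => (X : Polynomial ℤ) ^ (n-h) * qbinom n h) (n+1)]
  apply sum_congr rfl
  intro j hj
  have hjn : j ≤ n := by rw [mem_range] at hj; omega
  rw [hS j, show n + 1 - 1 - j = n - j from rfl,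
    show n - (n - j) = j from by omega, qbinom_symm n hjn]
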